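/- Let n ≥ 4, i with gcd(i,n)=1, and consider the Gold function G(x) = x^{2^i+1} on F_{2^n}. Let F(x) = x^{2^i+1} + x and ε(x) = Tr(x^{2^i+1} + x). Then the function F∘H(x) = x^{2^i+1} + x + ε(x)·(x^{2^i} + x), with H(x) = x + ε(x), is CCZ-equivalent to G. Moreover F∘H has algebraic degree 3, hence is not EA-equivalent to G (which has degree 2). -/

import Mathlib

/-- A function has algebraic degree at most `d` iff all `(d+1)`-fold discrete
derivatives vanish identically. -/
def degLE {V W : Type*} [AddCommGroup V] [AddCommGroup W] : (V → W) → ℕ → Prop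
  | F, 0 => ∀ γ x, F (x + γ) - F x = 0
  | F, (d + 1) => ∀ γ, degLE (fun x => F (x + γ) - F x) d

/-- An `F_p`-affine map. -/
def IsAffineMap (R : Type*) {V W : Type*} [CommSemiring R] [AddCommGroup V] [AddCommGroup W]
    [Module R V] [Module R W] (A : V → W) : Prop :=
  ∃ (L : V →ₗ[R] W) (c : W), ∀ x, A x = L x + c

/-- EA-equivalence of `(n,n)`-functions. -/
def EAequiv (p n : ℕ) [Fact p.Prime]
    (F F' : GaloisField p n → GaloisField p n) : Prop :=
  ∃ A₁ A₂ A₃ : GaloisField p n → GaloisField p n,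
    IsAffineMap (ZMod p) A₁ ∧ Function.Bijective A₁ ∧
    IsAffineMap (ZMod p) A₂ ∧ Function.Bijective A₂ ∧
    IsAffineMap (ZMod p) A₃ ∧
    ∀ x, F' x = A₁ (F (A₂ x)) + A₃ x

/-- CCZ-equivalence: an affine bijection of the product space maps the graph of `F`
onto the graph of `F'`. -/
def CCZequiv (p n : ℕ) [Fact p.Prime]
    (F F' : GaloisField p n → GaloisField p n) : Prop :=
  ∃ (L : (GaloisField p n × GaloisField p n) →ₗ[ZMod p] (GaloisField p n × GaloisField p n))
    (c : GaloisField p n × GaloisField p n),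
    Function.Bijective (fun q => L q + c) ∧
    (fun q => L q + c) '' {q : GaloisField p n × GaloisField p n | q.2 = F q.1}
      = {q : GaloisField p n × GaloisField p n | q.2 = F' q.1}

section deg
variable {V W : Type*} [AddCommGroup V] [AddCommGroup W]

lemma degLE_congr {F G : V → W} {d : ℕ} (hF : degLE F d) (h : ∀ x, F x = G x) : degLE G d := by
  obtain rfl : F = G := funext h; exact hF

lemma degLE_zero_fun : ∀ d : ℕ, degLE (fun _ : V => (0 : W)) d
  | 0 => fun γ x => by simp
  | (d+1) => fun γ => degLE_congr (degLE_zero_fun d) (by simp)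

lemma degLE_succ {F : V → W} : ∀ {d : ℕ}, degLE F d → degLE F (d+1) := by
  intro d
  induction d generalizing F with
  | zero => intro h γ; exact degLE_congr (degLE_zero_fun 0) (by intro x; rw [h γ x])
  | succ d ih => intro h γ; exact ih (h γ)

lemma degLE_const (w : W) (d : ℕ) : degLE (fun _ : V => w) d := by
  induction d with
  | zero => intro γ x; simp
  | succ d ih => exact degLE_succ ih

lemma degLE_add {F G : V → W} : ∀ {d : ℕ}, degLE F d → degLE G d →
    degLE (fun x => F x + G x) d := by
  intro d
  induction d generalizing F G with
  | zero =>
    intro hF hG γ x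
    show F (x + γ) + G (x + γ) - (F x + G x) = 0
    rw [sub_eq_zero, sub_eq_zero.mp (hF γ x), sub_eq_zero.mp (hG γ x)]
  | succ d ih =>
    intro hF hG γ
    exact degLE_congr (ih (hF γ) (hG γ)) (by intro x; simp; abel)

lemma degLE_comp_addHom {W' : Type*} [AddCommGroup W'] (τ : W →+ W') {F : V → W} :
    ∀ {d : ℕ}, degLE F d → degLE (fun x => τ (F x)) d := by
  intro d
  induction d generalizing F with
  | zero => intro hF γ x; rw [← map_sub, hF γ x, map_zero]
  | succ d ih => intro hF γ; exact degLE_congr (ih (hF γ)) (by intro x; simp [map_sub])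

lemma degLE_shift {F : V → W} (γ : V) : ∀ {d : ℕ}, degLE F d →
    degLE (fun x => F (x + γ)) d := by
  intro d
  induction d generalizing F with
  | zero =>
      intro hF δ x
      show F (x + δ + γ) - F (x + γ) = 0
      rw [add_right_comm]
      exact hF δ (x + γ)
  | succ d ih =>
    intro hF δ
    exact degLE_congr (ih (hF δ)) (by intro x; simp [add_right_comm])

lemma degLE_linear (τ : V →+ W) : degLE (fun x => τ x) 1 := by
  intro γ
  refine degLE_congr (degLE_const (τ γ) 0) ?_
  intro x
  show τ γ = τ (x + γ) - τ x
  rw [map_add]; abel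

lemma degLE_comp_affine {F : V → W} (L : V →+ V) (c : V) :
    ∀ {d : ℕ}, degLE F d → degLE (fun x => F (L x + c)) d := by
  intro d
  induction d generalizing F with
  | zero => intro hF γ x; simp only [map_add, add_right_comm _ _ c]; exact hF (L γ) (L x + c)
  | succ d ih =>
    intro hF γ
    exact degLE_congr (ih (hF (L γ)))
      (by intro x; simp only [map_add, add_right_comm _ _ c])

lemma degLE_smul {R : Type*} [CommRing R] [Module R W] :
    ∀ (N a b : ℕ), a + b = N → ∀ (ε : V → R) (M : V → W),
    degLE ε a → degLE M b → degLE (fun x => ε x • M x) N := by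
  intro N
  induction N with
  | zero =>
    rintro a b hab ε M hε hM
    obtain ⟨rfl, rfl⟩ : a = 0 ∧ b = 0 := by omega
    intro γ x
    show ε (x + γ) • M (x + γ) - ε x • M x = 0
    rw [sub_eq_zero.mp (hε γ x), sub_eq_zero.mp (hM γ x), sub_self]
  | succ N ih =>
    rintro a b hab ε M hε hM γ
    have key : ∀ x, ε (x + γ) • M (x + γ) - ε x • M x
        = (ε (x + γ) - ε x) • M (x + γ) + ε x • (M (x + γ) - M x) := by
      intro x; rw [sub_smul, smul_sub]; abel
    match a, b, hab with
    | 0, b, hab =>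
      obtain rfl : b = N + 1 := by omega
      have h1 : ∀ x, (ε (x + γ) - ε x) • M (x + γ) = 0 := by
        intro x; rw [hε γ x, zero_smul]
      refine degLE_congr (degLE_add (degLE_zero_fun N)
        (ih 0 N (by omega) ε (fun x => M (x + γ) - M x) hε (hM γ))) ?_
      intro x
      show 0 + ε x • (M (x + γ) - M x) = ε (x + γ) • M (x + γ) - ε x • M x
      rw [zero_add, key x, h1 x, zero_add]
    | (a+1), b, hab =>
      have t1 : degLE (fun x => (ε (x + γ) - ε x) • M (x + γ)) N :=
        ih a b (by omega) _ _ (hε γ) (degLE_shift γ hM)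
      have t2 : degLE (fun x => ε x • (M (x + γ) - M x)) N := by
        match b, hab with
        | 0, hab =>
          refine degLE_congr (degLE_zero_fun N) ?_
          intro x
          show (0 : W) = ε x • (M (x + γ) - M x)
          rw [hM γ x, smul_zero]
        | (b+1), hab =>
          exact ih (a+1) b (by omega) ε _ hε (hM γ)
      exact degLE_congr (degLE_add t1 t2) (fun x => (key x).symm)

end deg
section conc
variable (n : ℕ)

local notation "K" => GaloisField 2 n
local notation "Tr" => Algebra.trace (ZMod 2) (GaloisField 2 n)

lemma frobAlgEquiv_exists : ∃ σ : K ≃ₐ[ZMod 2] K, ∀ x : K, σ x = x ^ 2 := by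
  refine ⟨AlgEquiv.ofRingEquiv (f := frobeniusEquiv K 2) ?_, fun x => ?_⟩
  · intro c
    rw [frobeniusEquiv_apply, frobenius_def, ← map_pow, ZMod.pow_card]
  · rw [AlgEquiv.ofRingEquiv_apply, frobeniusEquiv_apply, frobenius_def]

lemma tr_sq (x : K) : Tr (x ^ 2) = Tr x := by
  obtain ⟨σ, hσ⟩ := frobAlgEquiv_exists n
  apply (algebraMap (ZMod 2) K).injective
  rw [trace_eq_sum_automorphisms, trace_eq_sum_automorphisms]
  rw [← Fintype.sum_equiv (Equiv.mulLeft σ) (fun τ => (σ * τ) x) (fun τ => τ x) (fun τ => rfl)]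
  refine Finset.sum_congr rfl fun τ _ => ?_
  rw [AlgEquiv.mul_apply, hσ, map_pow]

lemma tr_pow2 (k : ℕ) (x : K) : Tr (x ^ 2 ^ k) = Tr x := by
  induction k generalizing x with
  | zero => simp
  | succ k ih => rw [pow_succ, pow_mul, tr_sq, ih]

end conc

lemma pow_fix_mul {K : Type*} [Monoid K] (c : K) (s : ℕ) (h : c ^ 2 ^ s = c) :
    ∀ q, c ^ 2 ^ (s * q) = c
  | 0 => by simp
  | (q + 1) => by
    rw [Nat.mul_succ, pow_add, pow_mul, pow_fix_mul c s h q, h]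

lemma pow_fix_gcd {K : Type*} [Monoid K] : ∀ (s t : ℕ) (c : K), c ^ 2 ^ s = c →
    c ^ 2 ^ t = c → c ^ 2 ^ Nat.gcd s t = c
  | 0, t, c, _, ht => by simpa using ht
  | (s + 1), t, c, hs, ht => by
    rw [Nat.gcd_rec]
    refine pow_fix_gcd (t % (s + 1)) (s + 1) c ?_ hs
    have hdm : (s + 1) * (t / (s + 1)) + t % (s + 1) = t := Nat.div_add_mod t (s + 1)
    calc c ^ 2 ^ (t % (s + 1))
        = (c ^ 2 ^ ((s + 1) * (t / (s + 1)))) ^ 2 ^ (t % (s + 1)) := by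
          rw [pow_fix_mul c (s + 1) hs]
      _ = c := by rw [← pow_mul, ← pow_add, hdm]; exact ht
  decreasing_by exact Nat.mod_lt _ (Nat.succ_pos s)
lemma master_id {W : Type*} [AddCommGroup W] [Module (ZMod 2) W]
    (ea eb ec bba bca bcb : ZMod 2) (ma mb mc : W) :
    ea • ma + eb • mb + ec • mc
    + ((eb + ea + bba) • (mb + ma) + (ec + ea + bca) • (mc + ma)
        + (ec + eb + bcb) • (mc + mb))
    + (ec + eb + bcb + ea + (bca + bba)) • (mc + mb + ma)
    = bcb • ma + bca • mb + bba • mc := by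
  have h2 : ∀ w : W, (2 : ℕ) • w = 0 := by
    intro w
    rw [← Nat.cast_smul_eq_nsmul (ZMod 2), show ((2:ℕ) : ZMod 2) = 0 by decide, zero_smul]
  have h2z : ∀ w : W, (2 : ℤ) • w = 0 := by
    intro w
    rw [← Int.cast_smul_eq_zsmul (ZMod 2), show ((2:ℤ) : ZMod 2) = 0 by decide, zero_smul]
  have h4z : ∀ w : W, (4 : ℤ) • w = 0 := by
    intro w
    rw [show (4:ℤ) = 2 * 2 from rfl, mul_smul, h2z]
  have h4 : ∀ w : W, (4 : ℕ) • w = 0 := by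
    intro w
    rw [show (4:ℕ) = 2 * 2 from rfl, mul_smul, h2]
  simp only [smul_add, add_smul]
  abel_nf
  simp only [h2, h4, h2z, h4z, add_zero, zero_add, smul_zero]
  try abel

section main
variable (n i : ℕ)

local notation "K" => GaloisField 2 n
local notation "Tr" => Algebra.trace (ZMod 2) (GaloisField 2 n)

lemma h2K : (2 : K) = 0 := CharTwo.two_eq_zero

lemma frobK (x y : K) : (x + y) ^ 2 ^ i = x ^ 2 ^ i + y ^ 2 ^ i :=
  add_pow_char_pow x y 2 i

lemma gold_deg2 : degLE (fun x : K => x ^ (2 ^ i + 1)) 2 := by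
  intro a b c x
  show (fun x : K => x ^ (2 ^ i + 1)) (x + c + b + a) - _ - (_ - _) - (_ - _ - (_ - _)) = 0
  simp only [pow_succ, frobK n i]
  ring

lemma Mf_add (u v : K) : (u + v) ^ 2 ^ i + (u + v) = (u ^ 2 ^ i + u) + (v ^ 2 ^ i + v) := by
  rw [frobK n i]; ring

lemma eps_add (u v : K) :
    Tr ((u + v) ^ (2 ^ i + 1) + (u + v))
      = Tr (u ^ (2 ^ i + 1) + u) + Tr (v ^ (2 ^ i + 1) + v)
        + Tr (u ^ 2 ^ i * v + u * v ^ 2 ^ i) := by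
  rw [← map_add, ← map_add]
  congr 1
  rw [pow_succ, pow_succ, pow_succ, frobK n i]
  ring

lemma Bf_add_left (u v w : K) :
    Tr ((u + v) ^ 2 ^ i * w + (u + v) * w ^ 2 ^ i)
      = Tr (u ^ 2 ^ i * w + u * w ^ 2 ^ i) + Tr (v ^ 2 ^ i * w + v * w ^ 2 ^ i) := by
  rw [← map_add]
  congr 1
  rw [frobK n i]
  ring

lemma Bf_symm (u v : K) :
    Tr (u ^ 2 ^ i * v + u * v ^ 2 ^ i) = Tr (v ^ 2 ^ i * u + v * u ^ 2 ^ i) := by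
  congr 1; ring

lemma eps_shift (x : K) :
    Tr ((x + 1) ^ (2 ^ i + 1) + (x + 1)) = Tr (x ^ (2 ^ i + 1) + x) := by
  have hF1 : (x + 1) ^ (2 ^ i + 1) + (x + 1)
      = (x ^ (2 ^ i + 1) + x) + (x ^ 2 ^ i + x) := by
    rw [pow_succ, pow_succ, frobK n i, one_pow]
    linear_combination (h2K n)
  rw [hF1, map_add, map_add, map_add, tr_pow2 n i x]
  rw [CharTwo.add_self_eq_zero, add_zero]

lemma zmod2_cases (z : ZMod 2) : z = 0 ∨ z = 1 := by
  revert z; decide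

/-- `H ∘ H = id`. -/
lemma invol (x : K) :
    (x + Tr (x ^ (2 ^ i + 1) + x) • 1)
      + Tr ((x + Tr (x ^ (2 ^ i + 1) + x) • 1) ^ (2 ^ i + 1)
            + (x + Tr (x ^ (2 ^ i + 1) + x) • 1)) • (1 : K) = x := by
  rcases zmod2_cases (Tr (x ^ (2 ^ i + 1) + x)) with h | h <;> rw [h]
  · rw [zero_smul, add_zero, h, zero_smul, add_zero]
  · rw [one_smul, eps_shift n i x, h, one_smul]
    linear_combination (h2K n)

/-- `F' (H x) = F x`. -/
lemma keyFH (x : K) :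
    (x + Tr (x ^ (2 ^ i + 1) + x) • 1) ^ (2 ^ i + 1)
      + (x + Tr (x ^ (2 ^ i + 1) + x) • 1)
      + Tr ((x + Tr (x ^ (2 ^ i + 1) + x) • 1) ^ (2 ^ i + 1)
            + (x + Tr (x ^ (2 ^ i + 1) + x) • 1))
          • ((x + Tr (x ^ (2 ^ i + 1) + x) • 1) ^ 2 ^ i
            + (x + Tr (x ^ (2 ^ i + 1) + x) • 1))
      = x ^ (2 ^ i + 1) + x := by
  rcases zmod2_cases (Tr (x ^ (2 ^ i + 1) + x)) with h | h <;> rw [h]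
  · rw [zero_smul, add_zero, h, zero_smul, add_zero]
  · rw [one_smul, eps_shift n i x, h, one_smul]
    rw [pow_succ, frobK n i, one_pow]
    linear_combination (x ^ 2 ^ i + x + 2) * (h2K n)

lemma pow2n_fix (hn0 : n ≠ 0) (c : K) : c ^ 2 ^ n = c := by
  have : Fintype K := Fintype.ofFinite _
  have hcard : Fintype.card K = 2 ^ n := by
    rw [← Nat.card_eq_fintype_card, GaloisField.card 2 n hn0]
  rw [← hcard]
  exact FiniteField.pow_card c

lemma M_ker (hn0 : n ≠ 0) (hi : Nat.gcd i n = 1) (c : K) (h : c ^ 2 ^ i = c) :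
    c = 0 ∨ c = 1 := by
  have h1 := pow_fix_gcd i n c h (pow2n_fix n hn0 c)
  rw [hi, pow_one] at h1
  have h2 : c * (c - 1) = 0 := by linear_combination h1
  rcases mul_eq_zero.mp h2 with h3 | h3
  · exact Or.inl h3
  · exact Or.inr (by linear_combination h3)

lemma four_fix (hn0 : n ≠ 0) (hi : Nat.gcd i n = 1) (c : K) (h : c ^ 2 ^ (2 * i) = c) :
    c ^ 4 = c := by
  have hfix := pow_fix_gcd (2 * i) n c h (pow2n_fix n hn0 c)
  have hco : Nat.Coprime (Nat.gcd (2 * i) n) i := by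
    have h1 : Nat.Coprime i (Nat.gcd (2 * i) n) :=
      Nat.Coprime.coprime_dvd_right (Nat.gcd_dvd_right (2 * i) n) hi
    exact h1.symm
  have hdvd2 : Nat.gcd (2 * i) n ∣ 2 := by
    have := Nat.gcd_dvd_left (2 * i) n
    exact (Nat.Coprime.dvd_of_dvd_mul_right hco this)
  rcases (Nat.prime_two.eq_one_or_self_of_dvd _ hdvd2) with hg | hg
  · rw [hg, pow_one] at hfix
    calc c ^ 4 = (c ^ 2) ^ 2 := by ring
      _ = c := by rw [hfix, hfix]
  · rw [hg] at hfix
    simpa using hfix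

lemma red_exp (hn0 : n ≠ 0) (c : K) : c ^ 2 ^ (i + (n - i % n)) = c := by
  have h1 : n * (i / n) + i % n = i := Nat.div_add_mod i n
  have h2 : i % n < n := Nat.mod_lt _ (Nat.pos_of_ne_zero hn0)
  have h3 : i + (n - i % n) = n * (i / n + 1) := by
    have h4 : n * (i / n + 1) = n * (i / n) + n := by ring
    omega
  rw [h3]
  exact pow_fix_mul c n (pow2n_fix n hn0 c) _

lemma exists_a (hn : 4 ≤ n) (hi : Nat.gcd i n = 1) :
    ∃ a : K, a ^ 2 ^ i + a ^ 2 ^ (n - i % n) ≠ 0 := by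
  have hn0 : n ≠ 0 := by omega
  by_contra hcon
  push_neg at hcon
  have h4 : ∀ a : K, a ^ 4 = a := by
    intro a
    refine four_fix n i hn0 hi a ?_
    have heq : a ^ 2 ^ i = a ^ 2 ^ (n - i % n) := by
      linear_combination (hcon a) - (a ^ 2 ^ (n - i % n)) * (h2K n)
    have : a ^ 2 ^ (2 * i) = a := by
      have e1 : a ^ 2 ^ (2 * i) = (a ^ 2 ^ i) ^ 2 ^ i := by
        rw [← pow_mul, ← pow_add, two_mul]
      rw [e1, heq, ← pow_mul, ← pow_add]
      have : n - i % n + i = i + (n - i % n) := by omega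
      rw [this]
      exact red_exp n i hn0 a
    exact this
  -- every element is a root of X^4 - X, but there are 2^n > 4 elements
  classical
  have : Fintype K := Fintype.ofFinite _
  set p : Polynomial K := Polynomial.X ^ 4 - Polynomial.X with hp
  have hp0 : p ≠ 0 := by
    intro h0
    have hc : p.coeff 4 = 1 := by
      simp [hp, Polynomial.coeff_X_pow, Polynomial.coeff_X]
    rw [h0] at hc
    simp at hc
  have hsub : (Finset.univ : Finset K) ⊆ p.roots.toFinset := by
    intro a _
    rw [Multiset.mem_toFinset, Polynomial.mem_roots hp0]
    simp [hp, Polynomial.IsRoot, sub_eq_zero, h4 a]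
  have hcard : (2 : ℕ) ^ n ≤ 4 := by
    calc (2 : ℕ) ^ n = Nat.card K := (GaloisField.card 2 n hn0).symm
      _ = Fintype.card K := Nat.card_eq_fintype_card
      _ = (Finset.univ : Finset K).card := (Finset.card_univ).symm
      _ ≤ p.roots.toFinset.card := Finset.card_le_card hsub
      _ ≤ Multiset.card p.roots := Multiset.toFinset_card_le _
      _ ≤ p.natDegree := p.card_roots'
      _ ≤ 4 := by
          refine le_trans (Polynomial.natDegree_sub_le _ _) ?_
          simp [Polynomial.natDegree_X_pow]
  have : (16 : ℕ) ≤ 2 ^ n := by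
    calc (16 : ℕ) = 2 ^ 4 := by norm_num
      _ ≤ 2 ^ n := Nat.pow_le_pow_right (by norm_num) hn
  omega

lemma exists_b (v : K) (hv : v ≠ 0) : ∃ b : K, Tr (v * b) = 1 := by
  have hnd := traceForm_nondegenerate (ZMod 2) K
  by_contra hcon
  push_neg at hcon
  refine hv (hnd.1 v fun b => ?_)
  rw [Algebra.traceForm_apply]
  rcases zmod2_cases (Tr (v * b)) with h | h
  · exact h
  · exact absurd h (hcon b)

lemma Bf_eq (hn0 : n ≠ 0) (a b : K) :
    Tr (a ^ 2 ^ i * b + a * b ^ 2 ^ i)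
      = Tr ((a ^ 2 ^ i + a ^ 2 ^ (n - i % n)) * b) := by
  have h1 : Tr (a * b ^ 2 ^ i) = Tr (a ^ 2 ^ (n - i % n) * b) := by
    rw [← tr_pow2 n (n - i % n) (a * b ^ 2 ^ i)]
    congr 1
    rw [mul_pow, ← pow_mul, ← pow_add, red_exp n i hn0 b]
  rw [map_add, h1, ← map_add]
  congr 1
  ring

lemma not_deg2 (hn : 4 ≤ n) (hi : Nat.gcd i n = 1) :
    ¬ degLE (fun x : K => x ^ (2 ^ i + 1) + x
        + Tr (x ^ (2 ^ i + 1) + x) • (x ^ 2 ^ i + x)) 2 := by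
  intro hdeg
  classical
  have hn0 : n ≠ 0 := by omega
  have hQ : ∀ a b c : K,
      Tr (c ^ 2 ^ i * b + c * b ^ 2 ^ i) • (a ^ 2 ^ i + a)
      + Tr (c ^ 2 ^ i * a + c * a ^ 2 ^ i) • (b ^ 2 ^ i + b)
      + Tr (b ^ 2 ^ i * a + b * a ^ 2 ^ i) • (c ^ 2 ^ i + c) = 0 := by
    have hid : degLE (fun x : K => x) 1 := degLE_linear (AddMonoidHom.id K)
    have hFg : degLE (fun x : K => x ^ (2 ^ i + 1) + x) 2 :=
      degLE_add (gold_deg2 n i) (degLE_succ hid)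
    have hnegFg : degLE (fun x : K => -(x ^ (2 ^ i + 1) + x)) 2 :=
      degLE_comp_addHom (negAddMonoidHom : GaloisField 2 n →+ GaloisField 2 n) hFg
    have hT : degLE (fun x : K => Tr (x ^ (2 ^ i + 1) + x) • (x ^ 2 ^ i + x)) 2 := by
      refine degLE_congr (degLE_add hdeg hnegFg) ?_
      intro x
      show x ^ (2 ^ i + 1) + x + Tr (x ^ (2 ^ i + 1) + x) • (x ^ 2 ^ i + x)
          + -(x ^ (2 ^ i + 1) + x) = _
      abel
    intro a b c
    have e := hT a b c 0
    have h2i : (0 : K) ^ (2 ^ i) = 0 := zero_pow (pow_ne_zero i two_ne_zero)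
    have h2i1 : (0 : K) ^ (2 ^ i + 1) = 0 := zero_pow (Nat.succ_ne_zero _)
    simp only [zero_add, CharTwo.sub_eq_add, h2i, h2i1, add_zero, map_zero, zero_smul,
      smul_zero] at e
    rw [eps_add n i (c + b) a, eps_add n i c b, eps_add n i c a, eps_add n i b a,
      Bf_add_left n i c b a, Mf_add n i (c + b) a, Mf_add n i c b, Mf_add n i c a,
      Mf_add n i b a] at e
    have em := master_id (Tr (a ^ (2 ^ i + 1) + a)) (Tr (b ^ (2 ^ i + 1) + b))
      (Tr (c ^ (2 ^ i + 1) + c)) (Tr (b ^ 2 ^ i * a + b * a ^ 2 ^ i))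
      (Tr (c ^ 2 ^ i * a + c * a ^ 2 ^ i)) (Tr (c ^ 2 ^ i * b + c * b ^ 2 ^ i))
      (a ^ 2 ^ i + a) (b ^ 2 ^ i + b) (c ^ 2 ^ i + c)
    calc Tr (c ^ 2 ^ i * b + c * b ^ 2 ^ i) • (a ^ 2 ^ i + a)
        + Tr (c ^ 2 ^ i * a + c * a ^ 2 ^ i) • (b ^ 2 ^ i + b)
        + Tr (b ^ 2 ^ i * a + b * a ^ 2 ^ i) • (c ^ 2 ^ i + c) = _ := em.symm
      _ = _ := by rw [← e]; abel
  obtain ⟨a, hva⟩ := exists_a n i hn hi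
  obtain ⟨b, hb1⟩ := exists_b n _ hva
  have hBab : Tr (b ^ 2 ^ i * a + b * a ^ 2 ^ i) = 1 := by
    rw [Bf_symm n i b a, Bf_eq n i hn0 a b]
    exact hb1
  have hMc : ∀ c : K, c ^ 2 ^ i + c
      = Tr (c ^ 2 ^ i * b + c * b ^ 2 ^ i) • (a ^ 2 ^ i + a)
        + Tr (c ^ 2 ^ i * a + c * a ^ 2 ^ i) • (b ^ 2 ^ i + b) := by
    intro c
    have h := hQ a b c
    rw [hBab, one_smul] at h
    have h' := neg_eq_of_add_eq_zero_left h
    rw [CharTwo.neg_eq] at h'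
    exact h'
  -- counting
  have : Fintype K := Fintype.ofFinite _
  set tset : Finset K := {0, a ^ 2 ^ i + a, b ^ 2 ^ i + b,
    (a ^ 2 ^ i + a) + (b ^ 2 ^ i + b)} with htset
  have hmem : ∀ c : K, c ^ 2 ^ i + c ∈ tset := by
    intro c
    rw [hMc c]
    rcases zmod2_cases (Tr (c ^ 2 ^ i * b + c * b ^ 2 ^ i)) with h1 | h1 <;>
      rcases zmod2_cases (Tr (c ^ 2 ^ i * a + c * a ^ 2 ^ i)) with h2 | h2 <;>
      rw [h1, h2] <;>
      simp [htset, zero_smul, one_smul, Finset.mem_insert]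
  have hfib : ∀ v ∈ tset, (Finset.univ.filter (fun c : K => c ^ 2 ^ i + c = v)).card ≤ 2 := by
    intro v _
    by_cases hne : (Finset.univ.filter (fun c : K => c ^ 2 ^ i + c = v)).Nonempty
    · obtain ⟨c₀, hc₀⟩ := hne
      rw [Finset.mem_filter] at hc₀
      have hsub : (Finset.univ.filter (fun c : K => c ^ 2 ^ i + c = v)) ⊆ {c₀, c₀ + 1} := by
        intro c hc
        rw [Finset.mem_filter] at hc
        have hker : (c + c₀) ^ 2 ^ i = c + c₀ := by
          have h0 : (c + c₀) ^ 2 ^ i + (c + c₀) = 0 := by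
            rw [Mf_add n i c c₀, hc.2, hc₀.2, CharTwo.add_self_eq_zero]
          linear_combination h0 - (c + c₀) * (h2K n)
        rcases M_ker n i hn0 hi _ hker with h | h
        · have : c = c₀ := by linear_combination h - c₀ * (h2K n)
          simp [this]
        · have : c = c₀ + 1 := by linear_combination h - c₀ * (h2K n)
          simp [this]
      calc _ ≤ ({c₀, c₀ + 1} : Finset K).card := Finset.card_le_card hsub
        _ ≤ 2 := by
            refine le_trans (Finset.card_insert_le _ _) ?_
            simp
    · rw [Finset.not_nonempty_iff_eq_empty] at hne
      rw [hne]
      simp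
  have hcount := Finset.card_le_mul_card_image_of_maps_to
    (f := fun c : K => c ^ 2 ^ i + c) (s := Finset.univ) (t := tset)
    (fun c _ => hmem c) 2 hfib
  have htcard : tset.card ≤ 4 := by
    refine le_trans (Finset.card_insert_le _ _) ?_
    refine le_trans (Nat.add_le_add_right (Finset.card_insert_le _ _) 1) ?_
    refine le_trans (Nat.add_le_add_right (Nat.add_le_add_right (Finset.card_insert_le _ _) 1) 1) ?_
    simp
  have huniv : (Finset.univ : Finset K).card = 2 ^ n := by
    rw [Finset.card_univ, ← Nat.card_eq_fintype_card, GaloisField.card 2 n hn0]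
  have h16 : (16 : ℕ) ≤ 2 ^ n := by
    calc (16 : ℕ) = 2 ^ 4 := by norm_num
      _ ≤ 2 ^ n := Nat.pow_le_pow_right (by norm_num) hn
  omega

lemma deg3_part : degLE (fun x : K => x ^ (2 ^ i + 1) + x
    + Tr (x ^ (2 ^ i + 1) + x) • (x ^ 2 ^ i + x)) 3 := by
  have hid : degLE (fun x : K => x) 1 := degLE_linear (AddMonoidHom.id K)
  have hFg : degLE (fun x : K => x ^ (2 ^ i + 1) + x) 2 :=
    degLE_add (gold_deg2 n i) (degLE_succ hid)
  have hphi : degLE (fun x : K => x ^ 2 ^ i) 1 := by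
    refine degLE_congr (degLE_linear (AddMonoidHom.mk' (fun x : K => x ^ 2 ^ i)
      (frobK n i))) ?_
    intro x; rfl
  have hM : degLE (fun x : K => x ^ 2 ^ i + x) 1 := degLE_add hphi hid
  have hε : degLE (fun x : K => Tr (x ^ (2 ^ i + 1) + x)) 2 :=
    degLE_comp_addHom (Algebra.trace (ZMod 2) (GaloisField 2 n)).toAddMonoidHom hFg
  have hsmul := degLE_smul 3 2 1 rfl _ _ hε hM
  exact degLE_congr (degLE_add (degLE_succ hFg) hsmul) (fun x => rfl)

lemma not_EA_part (hn : 4 ≤ n) (hi : Nat.gcd i n = 1) :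
    ¬ EAequiv 2 n (fun x => x ^ (2 ^ i + 1))
      (fun x => x ^ (2 ^ i + 1) + x + Tr (x ^ (2 ^ i + 1) + x) • (x ^ 2 ^ i + x)) := by
  rintro ⟨A1, A2, A3, ⟨L1, c1, hA1⟩, -, ⟨L2, c2, hA2⟩, -, ⟨L3, c3, hA3⟩, heq⟩
  apply not_deg2 n i hn hi
  have hG2 : degLE (fun x : K => x ^ (2 ^ i + 1)) 2 := gold_deg2 n i
  have hGA2 : degLE (fun x : K => (A2 x) ^ (2 ^ i + 1)) 2 := by
    refine degLE_congr (degLE_comp_affine L2.toAddMonoidHom c2 hG2) ?_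
    intro x
    show (L2 x + c2) ^ (2 ^ i + 1) = (A2 x) ^ (2 ^ i + 1)
    rw [hA2 x]
  have h1 : degLE (fun x : K => L1 ((A2 x) ^ (2 ^ i + 1))) 2 :=
    degLE_comp_addHom L1.toAddMonoidHom hGA2
  have h2 : degLE (fun x : K => A1 ((A2 x) ^ (2 ^ i + 1))) 2 := by
    refine degLE_congr (degLE_add h1 (degLE_const c1 2)) ?_
    intro x
    exact (hA1 _).symm
  have h3 : degLE A3 2 := by
    refine degLE_congr (degLE_add (degLE_succ (degLE_linear L3.toAddMonoidHom))
      (degLE_const c3 2)) ?_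
    intro x
    exact (hA3 x).symm
  exact degLE_congr (degLE_add h2 h3) (fun x => (heq x).symm)

lemma ccz_part : CCZequiv 2 n (fun x => x ^ (2 ^ i + 1))
    (fun x => x ^ (2 ^ i + 1) + x + Tr (x ^ (2 ^ i + 1) + x) • (x ^ 2 ^ i + x)) := by
  classical
  refine ⟨{ toFun := fun p => (p.1 + Tr (p.2 + p.1) • 1, p.2 + p.1),
            map_add' := ?_, map_smul' := ?_ }, 0, ?_, ?_⟩
  · rintro ⟨x, y⟩ ⟨u, v⟩
    have harg : (y + v) + (x + u) = (y + x) + (v + u) := by ring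
    refine Prod.ext ?_ ?_
    · show (x + u) + Tr ((y + v) + (x + u)) • 1
        = (x + Tr (y + x) • 1) + (u + Tr (v + u) • 1)
      rw [harg, map_add, add_smul]
      abel
    · show (y + v) + (x + u) = (y + x) + (v + u)
      exact harg
  · rintro r ⟨x, y⟩
    refine Prod.ext ?_ ?_
    · show (r • x) + Tr (r • y + r • x) • 1 = r • (x + Tr (y + x) • 1)
      rw [← smul_add r y x, map_smul, smul_assoc, ← smul_add]
    · show r • y + r • x = r • (y + x)
      rw [← smul_add]
  · refine Function.bijective_iff_has_inverse.mpr
      ⟨fun p => (p.1 + Tr p.2 • 1, p.2 + p.1 + Tr p.2 • 1), ?_, ?_⟩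
    · rintro ⟨x, y⟩
      show ((fun p : K × K => (p.1 + Tr p.2 • 1, p.2 + p.1 + Tr p.2 • 1))
        ((x + Tr (y + x) • 1, y + x) + 0)) = (x, y)
      rw [add_zero]
      refine Prod.ext ?_ ?_
      · show (x + Tr (y + x) • 1) + Tr (y + x) • 1 = x
        rw [add_assoc, ← add_smul, CharTwo.add_self_eq_zero, zero_smul, add_zero]
      · show (y + x) + (x + Tr (y + x) • 1) + Tr (y + x) • 1 = y
        rw [show (y + x) + (x + Tr (y + x) • 1) + Tr (y + x) • 1
            = y + (x + x) + (Tr (y + x) • 1 + Tr (y + x) • 1) from by abel,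
          CharTwo.add_self_eq_zero, CharTwo.add_self_eq_zero, add_zero, add_zero]
    · rintro ⟨u, v⟩
      show ((u + Tr v • 1) + Tr ((v + u + Tr v • 1) + (u + Tr v • 1)) • 1,
          (v + u + Tr v • 1) + (u + Tr v • 1)) + 0 = (u, v)
      rw [add_zero]
      have harg : (v + u + Tr v • (1 : K)) + (u + Tr v • 1) = v := by
        rw [show (v + u + Tr v • (1:K)) + (u + Tr v • 1)
            = v + (u + u) + (Tr v • 1 + Tr v • 1) from by abel,
          CharTwo.add_self_eq_zero, CharTwo.add_self_eq_zero, add_zero, add_zero]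
      refine Prod.ext ?_ ?_
      · show (u + Tr v • 1) + Tr ((v + u + Tr v • 1) + (u + Tr v • 1)) • 1 = u
        rw [harg, add_assoc, ← add_smul, CharTwo.add_self_eq_zero, zero_smul, add_zero]
      · exact harg
  · ext ⟨w1, w2⟩
    simp only [Set.mem_image, Set.mem_setOf_eq]
    constructor
    · rintro ⟨⟨x, y⟩, hy, hL⟩
      simp only at hy
      subst hy
      rw [add_zero] at hL
      have h1 : x + Tr (x ^ (2 ^ i + 1) + x) • 1 = w1 := congrArg Prod.fst hL
      have h2 : x ^ (2 ^ i + 1) + x = w2 := congrArg Prod.snd hL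
      rw [← h1, ← h2]
      exact (keyFH n i x).symm
    · rintro hv
      refine ⟨(w1 + Tr (w1 ^ (2 ^ i + 1) + w1) • 1,
        (w1 + Tr (w1 ^ (2 ^ i + 1) + w1) • 1) ^ (2 ^ i + 1)), rfl, ?_⟩
      rw [add_zero]
      refine Prod.ext ?_ ?_
      · exact invol n i w1
      · show (w1 + Tr (w1 ^ (2 ^ i + 1) + w1) • 1) ^ (2 ^ i + 1)
          + (w1 + Tr (w1 ^ (2 ^ i + 1) + w1) • 1) = w2
        have h5 := keyFH n i (w1 + Tr (w1 ^ (2 ^ i + 1) + w1) • 1)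
        rw [invol n i w1] at h5
        rw [hv]
        exact h5.symm

end main
/-- For the Gold function `G(x) = x^{2^i+1}` with `gcd(i,n) = 1` and `n ≥ 4`, the cubic
function `x^{2^i+1} + x + Tr(x^{2^i+1}+x)·(x^{2^i}+x)` is CCZ-equivalent but not
EA-equivalent to `G`. -/
theorem gold_binary_CCZ_not_EA
    (n i : ℕ) [Fact (Nat.Prime 2)] (hn : 4 ≤ n) (hi : Nat.gcd i n = 1) :
    CCZequiv 2 n (fun x => x ^ (2 ^ i + 1))
      (fun x => x ^ (2 ^ i + 1) + x
        + Algebra.trace (ZMod 2) (GaloisField 2 n) (x ^ (2 ^ i + 1) + x)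
            • (x ^ (2 ^ i) + x))
    ∧ degLE (fun x : GaloisField 2 n => x ^ (2 ^ i + 1) + x
        + Algebra.trace (ZMod 2) (GaloisField 2 n) (x ^ (2 ^ i + 1) + x)
            • (x ^ (2 ^ i) + x)) 3
    ∧ ¬ degLE (fun x : GaloisField 2 n => x ^ (2 ^ i + 1) + x
        + Algebra.trace (ZMod 2) (GaloisField 2 n) (x ^ (2 ^ i + 1) + x)
            • (x ^ (2 ^ i) + x)) 2
    ∧ ¬ EAequiv 2 n (fun x => x ^ (2 ^ i + 1))
      (fun x => x ^ (2 ^ i + 1) + x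
        + Algebra.trace (ZMod 2) (GaloisField 2 n) (x ^ (2 ^ i + 1) + x)
            • (x ^ (2 ^ i) + x)) := by
  exact ⟨ccz_part n i, deg3_part n i, not_deg2 n i hn hi, not_EA_part n i hn hi⟩
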